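/- Main Theorem: If ‖·‖_α is a uniform crossnorm, then the operator norm ‖·‖_{[α,α]} on B[X⊗_α Y, V⊗_α W], when restricted to B[X,V]⊗B[Y,W], satisfies ‖L‖_ε ≤ ‖L‖_{[α,α]} ≤ ‖L‖_π for every L ∈ B[X,V]⊗B[Y,W], and hence ‖·‖_{[α,α]} is a reasonable crossnorm on B[X,V]⊗B[Y,W]. -/

import Mathlib

open scoped TensorProduct
open TensorProduct

noncomputable section

variable (𝕜 : Type*) [RCLike 𝕜]
variable {E F G H : Type*}
  [NormedAddCommGroup E] [NormedSpace 𝕜 E]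
  [NormedAddCommGroup F] [NormedSpace 𝕜 F]
  [NormedAddCommGroup G] [NormedSpace 𝕜 G]
  [NormedAddCommGroup H] [NormedSpace 𝕜 H]

/-- `N` is a norm on the `𝕜`-module `M`. -/
def IsNormOn {M : Type*} [AddCommGroup M] [Module 𝕜 M] (N : M → ℝ) : Prop :=
  (∀ u, N u = 0 ↔ u = 0) ∧ (∀ (c : 𝕜) (u : M), N (c • u) = ‖c‖ * N u) ∧
    (∀ u v : M, N (u + v) ≤ N u + N v)

/-- The linear functional `f ⊗ g` on `E ⊗ F`, with `(f ⊗ g)(x ⊗ y) = f x * g y`. -/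
def dualTensorFun (f : E →L[𝕜] 𝕜) (g : F →L[𝕜] 𝕜) : E ⊗[𝕜] F →ₗ[𝕜] 𝕜 :=
  (TensorProduct.lid 𝕜 𝕜).toLinearMap ∘ₗ
    TensorProduct.map (f : E →ₗ[𝕜] 𝕜) (g : F →ₗ[𝕜] 𝕜)

/-- The injective norm on the algebraic tensor product of normed spaces. -/
def injNorm (u : E ⊗[𝕜] F) : ℝ :=
  sSup {r | ∃ (f : E →L[𝕜] 𝕜) (g : F →L[𝕜] 𝕜),
    ‖f‖ ≤ 1 ∧ ‖g‖ ≤ 1 ∧ r = ‖dualTensorFun 𝕜 f g u‖}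

/-- The projective norm on the algebraic tensor product of normed spaces. -/
def projNorm (u : E ⊗[𝕜] F) : ℝ :=
  sInf {r | ∃ l : List (E × F), u = (l.map fun p => p.1 ⊗ₜ[𝕜] p.2).sum ∧
    r = (l.map fun p => ‖p.1‖ * ‖p.2‖).sum}

/-- `N` is a reasonable crossnorm on `E ⊗ F`: it is a norm, `N (x ⊗ y) ≤ ‖x‖‖y‖`, and every
`f ⊗ g` with `f, g` continuous functionals is bounded with dual norm at most `‖f‖‖g‖`. -/
def IsReasonableCrossnorm (N : E ⊗[𝕜] F → ℝ) : Prop :=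
  IsNormOn 𝕜 N ∧ (∀ (x : E) (y : F), N (x ⊗ₜ[𝕜] y) ≤ ‖x‖ * ‖y‖) ∧
    ∀ (f : E →L[𝕜] 𝕜) (g : F →L[𝕜] 𝕜) (u : E ⊗[𝕜] F),
      ‖dualTensorFun 𝕜 f g u‖ ≤ ‖f‖ * ‖g‖ * N u

/-- `T` is bounded from `(E ⊗ F, Nd)` to `(G ⊗ H, Nc)`. -/
def IsBddOn (Nd : E ⊗[𝕜] F → ℝ) (Nc : G ⊗[𝕜] H → ℝ)
    (T : E ⊗[𝕜] F →ₗ[𝕜] G ⊗[𝕜] H) : Prop :=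
  ∃ c : ℝ, 0 ≤ c ∧ ∀ u, Nc (T u) ≤ c * Nd u

/-- The operator norm of `T` from `(E ⊗ F, Nd)` to `(G ⊗ H, Nc)`. -/
def opNormOn (Nd : E ⊗[𝕜] F → ℝ) (Nc : G ⊗[𝕜] H → ℝ)
    (T : E ⊗[𝕜] F →ₗ[𝕜] G ⊗[𝕜] H) : ℝ :=
  sInf {c | 0 ≤ c ∧ ∀ u, Nc (T u) ≤ c * Nd u}

/-- The dual norm of a linear functional `φ` on `(E ⊗ F, N)`. -/
def dualNormOn (N : E ⊗[𝕜] F → ℝ) (φ : E ⊗[𝕜] F →ₗ[𝕜] 𝕜) : ℝ :=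
  sInf {c | 0 ≤ c ∧ ∀ u, ‖φ u‖ ≤ c * N u}

/-- The pair of norms `(NA, NB)` is uniform: `A ⊗ B` is bounded with bound `‖A‖‖B‖`. -/
def IsUniformPair (NA : E ⊗[𝕜] F → ℝ) (NB : G ⊗[𝕜] H → ℝ) : Prop :=
  ∀ (A : E →L[𝕜] G) (B : F →L[𝕜] H) (u : E ⊗[𝕜] F),
    NB (TensorProduct.map (A : E →ₗ[𝕜] G) (B : F →ₗ[𝕜] H) u) ≤ ‖A‖ * ‖B‖ * NA u

/-- The canonical action of `B[E,G] ⊗ B[F,H]` as linear maps from `E ⊗ F` to `G ⊗ H`,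
sending `Σⱼ Aⱼ ⊗ Bⱼ` to `Σᵢ xᵢ ⊗ yᵢ ↦ Σⱼ Σᵢ Aⱼxᵢ ⊗ Bⱼyᵢ`. -/
def opT : ((E →L[𝕜] G) ⊗[𝕜] (F →L[𝕜] H)) →ₗ[𝕜] (E ⊗[𝕜] F →ₗ[𝕜] G ⊗[𝕜] H) :=
  (TensorProduct.homTensorHomMap (RingHom.id 𝕜) E F G H) ∘ₗ
    TensorProduct.map (ContinuousLinearMap.coeLM 𝕜) (ContinuousLinearMap.coeLM 𝕜)

variable {X Y V W : Type*}
  [NormedAddCommGroup X] [NormedSpace 𝕜 X]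
  [NormedAddCommGroup Y] [NormedSpace 𝕜 Y]
  [NormedAddCommGroup V] [NormedSpace 𝕜 V]
  [NormedAddCommGroup W] [NormedSpace 𝕜 W]

-- AUX START

theorem IsNormOn.nonneg' {M : Type*} [AddCommGroup M] [Module 𝕜 M] {N : M → ℝ}
    (h : IsNormOn 𝕜 N) (u : M) : 0 ≤ N u := by
  have h0 : N 0 = 0 := (h.1 0).mpr rfl
  have h1 := h.2.2 u (-u)
  rw [add_neg_cancel, h0] at h1
  have hneg : N (-u) = N u := by
    have := h.2.1 (-1 : 𝕜) u
    simpa using this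
  linarith

theorem exists_list_rep (u : E ⊗[𝕜] F) :
    ∃ l : List (E × F), u = (l.map fun p => p.1 ⊗ₜ[𝕜] p.2).sum := by
  induction u with
  | zero => exact ⟨[], rfl⟩
  | tmul x y => exact ⟨[(x, y)], by simp⟩
  | add u v hu hv =>
    obtain ⟨l, hl⟩ := hu; obtain ⟨m, hm⟩ := hv
    exact ⟨l ++ m, by simp [hl, hm]⟩

theorem opT_tmul (A : E →L[𝕜] G) (B : F →L[𝕜] H) :
    opT 𝕜 (A ⊗ₜ[𝕜] B) = TensorProduct.map (A : E →ₗ[𝕜] G) (B : F →ₗ[𝕜] H) := by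
  simp [opT]

theorem dualTensorFun_tmul (f : E →L[𝕜] 𝕜) (g : F →L[𝕜] 𝕜) (x : E) (y : F) :
    dualTensorFun 𝕜 f g (x ⊗ₜ[𝕜] y) = f x * g y := by
  simp [dualTensorFun]

def sliceR (g : F →L[𝕜] 𝕜) : E ⊗[𝕜] F →ₗ[𝕜] E :=
  (TensorProduct.rid 𝕜 E).toLinearMap ∘ₗ
    TensorProduct.map (LinearMap.id) (g : F →ₗ[𝕜] 𝕜)

def sliceL (f : E →L[𝕜] 𝕜) : E ⊗[𝕜] F →ₗ[𝕜] F :=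
  (TensorProduct.lid 𝕜 F).toLinearMap ∘ₗ
    TensorProduct.map (f : E →ₗ[𝕜] 𝕜) (LinearMap.id)

@[simp] theorem sliceR_tmul (g : F →L[𝕜] 𝕜) (x : E) (y : F) :
    sliceR 𝕜 g (x ⊗ₜ[𝕜] y) = g y • x := by simp [sliceR]

@[simp] theorem sliceL_tmul (f : E →L[𝕜] 𝕜) (x : E) (y : F) :
    sliceL 𝕜 f (x ⊗ₜ[𝕜] y) = f x • y := by simp [sliceL]

theorem dualTensorFun_eq_sliceR (f : E →L[𝕜] 𝕜) (g : F →L[𝕜] 𝕜) (u : E ⊗[𝕜] F) :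
    dualTensorFun 𝕜 f g u = f (sliceR 𝕜 g u) := by
  induction u with
  | zero => simp
  | tmul x y => simp [dualTensorFun_tmul, mul_comm]
  | add u v hu hv => simp [map_add, hu, hv]

theorem eq_zero_of_sliceR_eq_zero (u : E ⊗[𝕜] F)
    (h : ∀ g : F →L[𝕜] 𝕜, sliceR 𝕜 g u = 0) : u = 0 := by
  classical
  let b := Module.Basis.ofVectorSpace 𝕜 E
  let Ψ : E ⊗[𝕜] F ≃ₗ[𝕜] (Module.Basis.ofVectorSpaceIndex 𝕜 E →₀ F) :=
    (TensorProduct.congr b.repr (LinearEquiv.refl 𝕜 F)).trans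
      (TensorProduct.finsuppScalarLeft 𝕜 F _)
  have key : ∀ (g : F →L[𝕜] 𝕜) (v : E ⊗[𝕜] F) (i : Module.Basis.ofVectorSpaceIndex 𝕜 E),
      b.repr (sliceR 𝕜 g v) i = g (Ψ v i) := by
    intro g v i
    induction v with
    | zero => simp
    | tmul x y =>
      simp only [sliceR_tmul, map_smul, Finsupp.smul_apply, smul_eq_mul, Ψ,
        LinearEquiv.trans_apply, TensorProduct.congr_tmul, LinearEquiv.refl_apply,
        TensorProduct.finsuppScalarLeft_apply_tmul_apply, map_smul]
      ring
    | add v w hv hw => simp [map_add, hv, hw]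
  have hΨ : Ψ u = 0 := by
    ext i
    refine NormedSpace.eq_zero_of_forall_dual_eq_zero 𝕜 fun g => ?_
    rw [← key g u i, h g]
    simp
  have := Ψ.injective (by rw [hΨ, map_zero] : Ψ u = Ψ 0)
  exact this


theorem opNormOn_spec {NA : X ⊗[𝕜] Y → ℝ} {NB : V ⊗[𝕜] W → ℝ}
    (hNAnn : ∀ u, 0 ≤ NA u) (T : X ⊗[𝕜] Y →ₗ[𝕜] V ⊗[𝕜] W)
    (hne : ∃ c : ℝ, 0 ≤ c ∧ ∀ u, NB (T u) ≤ c * NA u) :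
    0 ≤ opNormOn 𝕜 NA NB T ∧ ∀ u, NB (T u) ≤ opNormOn 𝕜 NA NB T * NA u := by
  have hne' : {c : ℝ | 0 ≤ c ∧ ∀ u, NB (T u) ≤ c * NA u}.Nonempty := hne
  constructor
  · exact le_csInf hne' fun c hc => hc.1
  · intro u
    rcases (hNAnn u).lt_or_eq with hpos | hzero
    · rw [← div_le_iff₀ hpos]
      exact le_csInf hne' fun c hc => (div_le_iff₀ hpos).mpr (hc.2 u)
    · obtain ⟨c, hc0, hc⟩ := hne
      have h1 := hc u
      rw [← hzero, mul_zero] at h1 ⊢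
      exact h1

theorem sum_bound {NA : X ⊗[𝕜] Y → ℝ} {NB : V ⊗[𝕜] W → ℝ}
    (hNB : IsReasonableCrossnorm 𝕜 NB) (hu : IsUniformPair 𝕜 NA NB)
    (l : List ((X →L[𝕜] V) × (Y →L[𝕜] W))) :
    0 ≤ (l.map fun p => ‖p.1‖ * ‖p.2‖).sum ∧
      ∀ u, NB (opT 𝕜 ((l.map fun p => p.1 ⊗ₜ[𝕜] p.2).sum) u) ≤
        (l.map fun p => ‖p.1‖ * ‖p.2‖).sum * NA u := by
  have hNB0 : NB 0 = 0 := (hNB.1.1 0).mpr rfl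
  induction l with
  | nil =>
    refine ⟨le_refl 0, fun u => ?_⟩
    simp only [List.map_nil, List.sum_nil, map_zero, LinearMap.zero_apply, hNB0, zero_mul]
    exact le_refl 0
  | cons p l ih =>
    constructor
    · simp only [List.map_cons, List.sum_cons]
      have := mul_nonneg (norm_nonneg p.1) (norm_nonneg p.2)
      linarith [ih.1]
    · intro u
      simp only [List.map_cons, List.sum_cons, map_add, LinearMap.add_apply]
      calc NB (opT 𝕜 (p.1 ⊗ₜ[𝕜] p.2) u + opT 𝕜 ((l.map fun p => p.1 ⊗ₜ[𝕜] p.2).sum) u)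
          ≤ NB (opT 𝕜 (p.1 ⊗ₜ[𝕜] p.2) u) + NB (opT 𝕜 ((l.map fun p => p.1 ⊗ₜ[𝕜] p.2).sum) u) :=
            hNB.1.2.2 _ _
        _ ≤ ‖p.1‖ * ‖p.2‖ * NA u + (l.map fun p => ‖p.1‖ * ‖p.2‖).sum * NA u := by
            refine add_le_add ?_ (ih.2 u)
            rw [opT_tmul]
            exact hu p.1 p.2 u
        _ = (‖p.1‖ * ‖p.2‖ + (l.map fun p => ‖p.1‖ * ‖p.2‖).sum) * NA u := by ring

/-- The two key slice identities and the bound on `dualTensorFun f g L`. -/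
theorem key_dual_bound {NA : X ⊗[𝕜] Y → ℝ} {NB : V ⊗[𝕜] W → ℝ}
    (hNA : IsReasonableCrossnorm 𝕜 NA) (hNB : IsReasonableCrossnorm 𝕜 NB)
    (hu : IsUniformPair 𝕜 NA NB)
    (f : (X →L[𝕜] V) →L[𝕜] 𝕜) (g : (Y →L[𝕜] W) →L[𝕜] 𝕜)
    (L : (X →L[𝕜] V) ⊗[𝕜] (Y →L[𝕜] W)) :
    ‖dualTensorFun 𝕜 f g L‖ ≤ ‖f‖ * ‖g‖ * opNormOn 𝕜 NA NB (opT 𝕜 L) := by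
  set NL := opNormOn 𝕜 NA NB (opT 𝕜 L) with hNL
  obtain ⟨l, hl⟩ := exists_list_rep 𝕜 L
  have hspec := opNormOn_spec 𝕜 (hNA.1.nonneg' 𝕜) (opT 𝕜 L)
    ⟨(l.map fun p => ‖p.1‖ * ‖p.2‖).sum, (sum_bound 𝕜 hNB hu l).1,
      by rw [hl]; exact (sum_bound 𝕜 hNB hu l).2⟩
  have hNL0 : 0 ≤ NL := hspec.1
  -- Step A
  have stepA : ∀ (x : X) (y : Y) (φ : V →L[𝕜] 𝕜) (ψ : W →L[𝕜] 𝕜),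
      ‖dualTensorFun 𝕜 φ ψ (opT 𝕜 L (x ⊗ₜ[𝕜] y))‖ ≤ ‖φ‖ * (‖ψ‖ * (NL * (‖x‖ * ‖y‖))) := by
    intro x y φ ψ
    have h1 := hNB.2.2 φ ψ (opT 𝕜 L (x ⊗ₜ[𝕜] y))
    have h2 := hspec.2 (x ⊗ₜ[𝕜] y)
    have h3 := hNA.2.1 x y
    have h4 : NB (opT 𝕜 L (x ⊗ₜ[𝕜] y)) ≤ NL * (‖x‖ * ‖y‖) :=
      h2.trans (mul_le_mul_of_nonneg_left h3 hNL0)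
    calc ‖dualTensorFun 𝕜 φ ψ (opT 𝕜 L (x ⊗ₜ[𝕜] y))‖
        ≤ ‖φ‖ * ‖ψ‖ * NB (opT 𝕜 L (x ⊗ₜ[𝕜] y)) := h1
      _ ≤ ‖φ‖ * ‖ψ‖ * (NL * (‖x‖ * ‖y‖)) :=
          mul_le_mul_of_nonneg_left h4 (mul_nonneg (norm_nonneg φ) (norm_nonneg ψ))
      _ = ‖φ‖ * (‖ψ‖ * (NL * (‖x‖ * ‖y‖))) := by ring
  -- the evaluation functional
  -- Identity I1
  have I1 : ∀ (x : X) (φ : V →L[𝕜] 𝕜) (ψ : W →L[𝕜] 𝕜) (y : Y)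
      (M : (X →L[𝕜] V) ⊗[𝕜] (Y →L[𝕜] W)),
      ψ ((sliceL 𝕜 (φ.comp (ContinuousLinearMap.apply 𝕜 V x)) M) y)
        = dualTensorFun 𝕜 φ ψ (opT 𝕜 M (x ⊗ₜ[𝕜] y)) := by
    intro x φ ψ y M
    induction M with
    | zero => simp
    | tmul A B =>
      rw [sliceL_tmul, opT_tmul]
      simp only [TensorProduct.map_tmul, ContinuousLinearMap.coe_coe, dualTensorFun_tmul,
        ContinuousLinearMap.comp_apply, ContinuousLinearMap.apply_apply,
        ContinuousLinearMap.coe_smul', Pi.smul_apply, map_smul, smul_eq_mul]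
    | add M M' hM hM' =>
      simp only [map_add, LinearMap.add_apply, ContinuousLinearMap.add_apply] at *
      rw [hM, hM']
  -- Step B : norm bound on sliceL
  have stepB : ∀ (x : X) (φ : V →L[𝕜] 𝕜),
      ‖sliceL 𝕜 (φ.comp (ContinuousLinearMap.apply 𝕜 V x)) L‖ ≤ ‖φ‖ * (‖x‖ * NL) := by
    intro x φ
    refine ContinuousLinearMap.opNorm_le_bound _
      (mul_nonneg (norm_nonneg φ) (mul_nonneg (norm_nonneg x) hNL0)) fun y => ?_
    refine NormedSpace.norm_le_dual_bound 𝕜 _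
      (mul_nonneg (mul_nonneg (norm_nonneg φ) (mul_nonneg (norm_nonneg x) hNL0))
        (norm_nonneg y)) fun ψ => ?_
    calc ‖ψ ((sliceL 𝕜 (φ.comp (ContinuousLinearMap.apply 𝕜 V x)) L) y)‖
        = ‖dualTensorFun 𝕜 φ ψ (opT 𝕜 L (x ⊗ₜ[𝕜] y))‖ := by rw [I1]
      _ ≤ ‖φ‖ * (‖ψ‖ * (NL * (‖x‖ * ‖y‖))) := stepA x y φ ψ
      _ = ‖φ‖ * (‖x‖ * NL) * ‖y‖ * ‖ψ‖ := by ring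
  -- Identity I2
  have I2 : ∀ (x : X) (φ : V →L[𝕜] 𝕜) (M : (X →L[𝕜] V) ⊗[𝕜] (Y →L[𝕜] W)),
      φ ((sliceR 𝕜 g M) x) = g (sliceL 𝕜 (φ.comp (ContinuousLinearMap.apply 𝕜 V x)) M) := by
    intro x φ M
    induction M with
    | zero => simp
    | tmul A B =>
      rw [sliceR_tmul, sliceL_tmul]
      simp only [ContinuousLinearMap.coe_smul', Pi.smul_apply, map_smul, smul_eq_mul,
        ContinuousLinearMap.comp_apply, ContinuousLinearMap.apply_apply]
      ring
    | add M M' hM hM' =>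
      simp only [map_add, ContinuousLinearMap.add_apply] at *
      rw [hM, hM']
  -- Step C : norm bound on sliceR
  have stepC : ‖sliceR 𝕜 g L‖ ≤ ‖g‖ * NL := by
    refine ContinuousLinearMap.opNorm_le_bound _
      (mul_nonneg (norm_nonneg g) hNL0) fun x => ?_
    refine NormedSpace.norm_le_dual_bound 𝕜 _
      (mul_nonneg (mul_nonneg (norm_nonneg g) hNL0) (norm_nonneg x)) fun φ => ?_
    calc ‖φ ((sliceR 𝕜 g L) x)‖
        = ‖g (sliceL 𝕜 (φ.comp (ContinuousLinearMap.apply 𝕜 V x)) L)‖ := by rw [I2]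
      _ ≤ ‖g‖ * ‖sliceL 𝕜 (φ.comp (ContinuousLinearMap.apply 𝕜 V x)) L‖ := g.le_opNorm _
      _ ≤ ‖g‖ * (‖φ‖ * (‖x‖ * NL)) :=
          mul_le_mul_of_nonneg_left (stepB x φ) (norm_nonneg g)
      _ = ‖g‖ * NL * ‖x‖ * ‖φ‖ := by ring
  calc ‖dualTensorFun 𝕜 f g L‖ = ‖f (sliceR 𝕜 g L)‖ := by rw [dualTensorFun_eq_sliceR]
    _ ≤ ‖f‖ * ‖sliceR 𝕜 g L‖ := f.le_opNorm _
    _ ≤ ‖f‖ * (‖g‖ * NL) := mul_le_mul_of_nonneg_left stepC (norm_nonneg f)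
    _ = ‖f‖ * ‖g‖ * NL := by ring

/-- Main Theorem: `‖L‖_ε ≤ ‖L‖_{[α,α]} ≤ ‖L‖_π`, hence `‖·‖_{[α,α]}` is a
reasonable crossnorm on `B[X,V] ⊗ B[Y,W]`. -/
theorem stmt9 (NA : X ⊗[𝕜] Y → ℝ) (NB : V ⊗[𝕜] W → ℝ)
    (hNA : IsReasonableCrossnorm 𝕜 NA) (hNB : IsReasonableCrossnorm 𝕜 NB)
    (hu : IsUniformPair 𝕜 NA NB) :
    (∀ L : (X →L[𝕜] V) ⊗[𝕜] (Y →L[𝕜] W),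
      injNorm 𝕜 L ≤ opNormOn 𝕜 NA NB (opT 𝕜 L) ∧
      opNormOn 𝕜 NA NB (opT 𝕜 L) ≤ projNorm 𝕜 L) ∧
    IsReasonableCrossnorm 𝕜
      (fun L : (X →L[𝕜] V) ⊗[𝕜] (Y →L[𝕜] W) => opNormOn 𝕜 NA NB (opT 𝕜 L)) := by
  have hNAnn : ∀ u, 0 ≤ NA u := hNA.1.nonneg' 𝕜
  have hNB0 : NB 0 = 0 := (hNB.1.1 0).mpr rfl
  have hbdd : ∀ L : (X →L[𝕜] V) ⊗[𝕜] (Y →L[𝕜] W),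
      BddBelow {c : ℝ | 0 ≤ c ∧ ∀ u, NB (opT 𝕜 L u) ≤ c * NA u} :=
    fun L => ⟨0, fun c hc => hc.1⟩
  have hspec : ∀ L : (X →L[𝕜] V) ⊗[𝕜] (Y →L[𝕜] W),
      0 ≤ opNormOn 𝕜 NA NB (opT 𝕜 L) ∧
      ∀ u, NB (opT 𝕜 L u) ≤ opNormOn 𝕜 NA NB (opT 𝕜 L) * NA u := by
    intro L
    obtain ⟨l, hl⟩ := exists_list_rep 𝕜 L
    exact opNormOn_spec 𝕜 hNAnn _
      ⟨_, (sum_bound 𝕜 hNB hu l).1, by rw [hl]; exact (sum_bound 𝕜 hNB hu l).2⟩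
  have hle : ∀ (L : (X →L[𝕜] V) ⊗[𝕜] (Y →L[𝕜] W)) (c : ℝ), 0 ≤ c →
      (∀ u, NB (opT 𝕜 L u) ≤ c * NA u) → opNormOn 𝕜 NA NB (opT 𝕜 L) ≤ c :=
    fun L c h1 h2 => csInf_le (hbdd L) ⟨h1, h2⟩
  have hN0 : opNormOn 𝕜 NA NB (opT 𝕜 (0 : (X →L[𝕜] V) ⊗[𝕜] (Y →L[𝕜] W))) = 0 := by
    refine le_antisymm (hle 0 0 le_rfl fun u => ?_) (hspec 0).1
    rw [map_zero, LinearMap.zero_apply, hNB0, zero_mul]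
  have hsmul_le : ∀ (c : 𝕜) (L : (X →L[𝕜] V) ⊗[𝕜] (Y →L[𝕜] W)),
      opNormOn 𝕜 NA NB (opT 𝕜 (c • L)) ≤ ‖c‖ * opNormOn 𝕜 NA NB (opT 𝕜 L) := by
    intro c L
    refine hle _ _ (mul_nonneg (norm_nonneg c) (hspec L).1) fun u => ?_
    have h1 : opT 𝕜 (c • L) u = c • (opT 𝕜 L u) := by rw [map_smul]; rfl
    rw [h1, hNB.1.2.1 c, mul_assoc]
    exact mul_le_mul_of_nonneg_left ((hspec L).2 u) (norm_nonneg c)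
  have hsmul : ∀ (c : 𝕜) (L : (X →L[𝕜] V) ⊗[𝕜] (Y →L[𝕜] W)),
      opNormOn 𝕜 NA NB (opT 𝕜 (c • L)) = ‖c‖ * opNormOn 𝕜 NA NB (opT 𝕜 L) := by
    intro c L
    rcases eq_or_ne c 0 with rfl | hc
    · rw [zero_smul, hN0, norm_zero, zero_mul]
    · refine le_antisymm (hsmul_le c L) ?_
      have h2 := hsmul_le c⁻¹ (c • L)
      rw [inv_smul_smul₀ hc] at h2
      have hc' : ‖c‖ ≠ 0 := norm_ne_zero_iff.mpr hc
      calc ‖c‖ * opNormOn 𝕜 NA NB (opT 𝕜 L)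
          ≤ ‖c‖ * (‖c⁻¹‖ * opNormOn 𝕜 NA NB (opT 𝕜 (c • L))) :=
            mul_le_mul_of_nonneg_left h2 (norm_nonneg c)
        _ = opNormOn 𝕜 NA NB (opT 𝕜 (c • L)) := by
            rw [norm_inv, ← mul_assoc, mul_inv_cancel₀ hc', one_mul]
  have htri : ∀ L M : (X →L[𝕜] V) ⊗[𝕜] (Y →L[𝕜] W),
      opNormOn 𝕜 NA NB (opT 𝕜 (L + M)) ≤
        opNormOn 𝕜 NA NB (opT 𝕜 L) + opNormOn 𝕜 NA NB (opT 𝕜 M) := by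
    intro L M
    refine hle _ _ (add_nonneg (hspec L).1 (hspec M).1) fun u => ?_
    have h1 : opT 𝕜 (L + M) u = opT 𝕜 L u + opT 𝕜 M u := by rw [map_add]; rfl
    rw [h1]
    calc NB (opT 𝕜 L u + opT 𝕜 M u) ≤ NB (opT 𝕜 L u) + NB (opT 𝕜 M u) := hNB.1.2.2 _ _
      _ ≤ opNormOn 𝕜 NA NB (opT 𝕜 L) * NA u + opNormOn 𝕜 NA NB (opT 𝕜 M) * NA u :=
          add_le_add ((hspec L).2 u) ((hspec M).2 u)
      _ = (opNormOn 𝕜 NA NB (opT 𝕜 L) + opNormOn 𝕜 NA NB (opT 𝕜 M)) * NA u := by ring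
  have hdef : ∀ L : (X →L[𝕜] V) ⊗[𝕜] (Y →L[𝕜] W),
      opNormOn 𝕜 NA NB (opT 𝕜 L) = 0 → L = 0 := by
    intro L hL0
    refine eq_zero_of_sliceR_eq_zero 𝕜 L fun g => ?_
    refine NormedSpace.eq_zero_of_forall_dual_eq_zero 𝕜 fun f => ?_
    have h := key_dual_bound 𝕜 hNA hNB hu f g L
    rw [hL0, mul_zero] at h
    rw [← dualTensorFun_eq_sliceR]
    exact norm_le_zero_iff.mp h
  have hcross : ∀ (A : X →L[𝕜] V) (B : Y →L[𝕜] W),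
      opNormOn 𝕜 NA NB (opT 𝕜 (A ⊗ₜ[𝕜] B)) ≤ ‖A‖ * ‖B‖ := by
    intro A B
    refine hle _ _ (mul_nonneg (norm_nonneg A) (norm_nonneg B)) fun u => ?_
    rw [opT_tmul]
    exact hu A B u
  have hproj : ∀ L : (X →L[𝕜] V) ⊗[𝕜] (Y →L[𝕜] W),
      opNormOn 𝕜 NA NB (opT 𝕜 L) ≤ projNorm 𝕜 L := by
    intro L
    have hrepne : {r : ℝ | ∃ l : List ((X →L[𝕜] V) × (Y →L[𝕜] W)),
        L = (l.map fun p => p.1 ⊗ₜ[𝕜] p.2).sum ∧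
        r = (l.map fun p => ‖p.1‖ * ‖p.2‖).sum}.Nonempty := by
      obtain ⟨l, hl⟩ := exists_list_rep 𝕜 L
      exact ⟨_, l, hl, rfl⟩
    refine le_csInf hrepne ?_
    rintro r ⟨l, hl, rfl⟩
    exact hle _ _ (sum_bound 𝕜 hNB hu l).1 (by rw [hl]; exact (sum_bound 𝕜 hNB hu l).2)
  have hinj : ∀ L : (X →L[𝕜] V) ⊗[𝕜] (Y →L[𝕜] W),
      injNorm 𝕜 L ≤ opNormOn 𝕜 NA NB (opT 𝕜 L) := by
    intro L
    refine Real.sSup_le ?_ (hspec L).1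
    rintro r ⟨f, g, hf, hg, rfl⟩
    have h := key_dual_bound 𝕜 hNA hNB hu f g L
    have hfg : ‖f‖ * ‖g‖ ≤ 1 :=
      (mul_le_mul_of_nonneg_right hf (norm_nonneg g)).trans (by rwa [one_mul])
    calc ‖dualTensorFun 𝕜 f g L‖ ≤ ‖f‖ * ‖g‖ * opNormOn 𝕜 NA NB (opT 𝕜 L) := h
      _ ≤ 1 * opNormOn 𝕜 NA NB (opT 𝕜 L) := mul_le_mul_of_nonneg_right hfg (hspec L).1
      _ = opNormOn 𝕜 NA NB (opT 𝕜 L) := one_mul _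
  refine ⟨fun L => ⟨hinj L, hproj L⟩,
    ⟨⟨fun L => ⟨hdef L, ?_⟩, hsmul, htri⟩, hcross,
      fun f g L => key_dual_bound 𝕜 hNA hNB hu f g L⟩⟩
  rintro rfl
  exact hN0
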